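/- Let X be a complex Banach space, U ⊆ X* an absolutely convex open set with fundamental family of absolutely convex U-bounded sets (Uₙ), which is not boundedly regular. Then there exist xₙ* ∈ Ũ \ weak*-closure(Uₙ) and xₙ ∈ X with |xₙ*(xₙ)| > 1 and |x*(xₙ)| ≤ 1 for all x* ∈ weak*-closure(Uₙ); consequently the homogeneous polynomials Pₙ(x*) = (x*(xₙ))^{pₙ} (with pₙ chosen so |xₙ*(xₙ)|^{pₙ} > n) form a sequence bounded uniformly on each weak*-closure(Uₚ) (by 1, for n ≥ p) but unbounded on some Ũ-bounded set. -/

import Mathlib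

open Metric NormedSpace Pointwise

variable {X : Type*} [NormedAddCommGroup X] [NormedSpace ℂ X]

/-- Weak* closure of a set of functionals on the complex Banach space `X`. -/
noncomputable def wscl (S : Set (StrongDual ℂ X)) : Set (StrongDual ℂ X) :=
  StrongDual.toWeakDual ⁻¹' closure (StrongDual.toWeakDual '' S)

/-- `B` is a `U`-bounded set: norm-bounded with positive distance to the complement of `U`. -/
def UBounded (U B : Set (StrongDual ℂ X)) : Prop :=
  B ⊆ U ∧ Bornology.IsBounded B ∧ ∃ c > 0, ∀ x ∈ B, ∀ y ∉ U, c ≤ dist x y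

/-- The envelope `Ũ`: the union of the weak* closures of all `U`-bounded sets. -/
noncomputable def tildeEnv (U : Set (StrongDual ℂ X)) : Set (StrongDual ℂ X) :=
  ⋃ B ∈ {B | UBounded U B}, wscl B


instance : IsScalarTower ℝ ℂ (WeakDual ℂ X) :=
  inferInstanceAs (IsScalarTower ℝ ℂ (StrongDual ℂ X))

instance WeakDual.instCCSR :
    @ContinuousConstSMul ℝ (WeakDual ℂ X) _ (Module.complexToReal (WeakDual ℂ X)).toSMul :=
  ⟨fun c => continuous_const_smul (c : ℂ)⟩

instance WeakDual.instLCSR :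
    @LocallyConvexSpace ℝ (WeakDual ℂ X) _ _ _ (Module.complexToReal (WeakDual ℂ X)) _ :=
  WeakBilin.locallyConvexSpace (B := topDualPairing ℂ X)

open Topology Filter in
lemma exists_eval_of_continuous (f : WeakDual ℂ X →L[ℂ] ℂ) :
    ∃ x : X, ∀ φ : StrongDual ℂ X, f (StrongDual.toWeakDual φ) = φ x := by
  have h1 : f ⁻¹' (Metric.ball 0 1) ∈ 𝓝 (0 : WeakDual ℂ X) := by
    have := f.continuous.continuousAt (x := 0)
    rw [ContinuousAt, map_zero] at this
    exact this (Metric.ball_mem_nhds 0 one_pos)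
  rw [show (𝓝 (0 : WeakDual ℂ X)) = _ from nhds_induced _ _] at h1
  obtain ⟨V, hV, hVsub⟩ := h1
  have h0 : (fun y => ((topDualPairing ℂ X) (0 : WeakDual ℂ X)) y) = (0 : X → ℂ) := by ext y; rfl
  rw [h0, nhds_pi, Filter.mem_pi] at hV
  obtain ⟨I, hIfin, t, ht, htV⟩ := hV
  have hker : ∀ φ : StrongDual ℂ X, (∀ i ∈ I, φ i = 0) → f (StrongDual.toWeakDual φ) = 0 := by
    intro φ hφ
    by_contra hne
    set a := f (StrongDual.toWeakDual φ) with ha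
    have hmem : (fun x y => ((topDualPairing ℂ X) x) y) (a⁻¹ • StrongDual.toWeakDual φ) ∈ V := by
      apply htV
      intro i hi
      have h2 : ((topDualPairing ℂ X) (StrongDual.toWeakDual φ)) i = 0 := hφ i hi
      simp only [map_smul, LinearMap.smul_apply, h2, smul_zero]
      rw [show ((topDualPairing ℂ X) (a⁻¹ • StrongDual.toWeakDual φ)) i = 0 by
        change a⁻¹ * φ i = 0; rw [hφ i hi, mul_zero]]
      simpa using mem_of_mem_nhds (ht i)
    have h3 := hVsub hmem
    simp only [Set.mem_preimage, mem_ball, dist_zero_right, map_smul, smul_eq_mul, ← ha] at h3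
    rw [inv_mul_cancel₀ hne] at h3
    simp at h3
  haveI : Finite ↥I := hIfin.to_subtype
  set L : ↥I → StrongDual ℂ X →ₗ[ℂ] ℂ := fun i => (topDualPairing ℂ X).flip (i : X) with hL
  set K : StrongDual ℂ X →ₗ[ℂ] ℂ := f.toLinearMap.comp StrongDual.toWeakDual.toLinearMap with hK
  have hsub : ⨅ i, LinearMap.ker (L i) ≤ LinearMap.ker K := by
    intro φ hφ
    simp only [Submodule.mem_iInf, LinearMap.mem_ker] at hφ ⊢
    exact hker φ fun i hi => hφ ⟨i, hi⟩
  have hspan := mem_span_of_iInf_ker_le_ker hsub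
  haveI : Fintype ↥I := hIfin.fintype
  obtain ⟨c, hc⟩ := (Submodule.mem_span_range_iff_exists_fun ℂ).1 hspan
  refine ⟨∑ i, c i • (i : X), ?_⟩
  intro φ
  have := LinearMap.congr_fun hc φ
  simp only [LinearMap.coe_sum, Finset.sum_apply, LinearMap.smul_apply, hK, hL,
    LinearMap.coe_comp, Function.comp_apply, LinearMap.flip_apply,
    topDualPairing_apply, smul_eq_mul] at this
  rw [map_sum]
  simp only [map_smul, smul_eq_mul]
  exact this.symm ▸ rfl


lemma separation_lemma {C : Set (StrongDual ℂ X)} (hCc : Convex ℝ C) (hCb : Balanced ℂ C)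
    {g : StrongDual ℂ X} (hg : g ∉ wscl C) (hg0 : g ≠ 0) :
    ∃ x : X, 1 < ‖g x‖ ∧ ∀ f ∈ wscl C, ‖f x‖ ≤ 1 := by
  rcases C.eq_empty_or_nonempty with rfl | ⟨a, ha⟩
  · obtain ⟨y, hy⟩ : ∃ y, g y ≠ 0 := by
      by_contra h
      push_neg at h
      exact hg0 (ContinuousLinearMap.ext h)
    refine ⟨(2 * (g y)⁻¹) • y, ?_, ?_⟩
    · rw [map_smul, smul_eq_mul, mul_assoc, inv_mul_cancel₀ hy, mul_one]
      norm_num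
    · intro f hf
      exfalso
      simp [wscl, Set.image_empty] at hf
  · set s := closure (StrongDual.toWeakDual '' C) with hs
    have hs_conv : Convex ℝ s :=
      (hCc.linear_image ((StrongDual.toWeakDual : StrongDual ℂ X ≃ₗ[ℂ] WeakDual ℂ X).toLinearMap.restrictScalars ℝ)).closure
    have hs_bal : Balanced ℂ s := by
      refine Balanced.closure ?_
      intro c hc z hz
      obtain ⟨w, hw, rfl⟩ := hz
      obtain ⟨ψ, hψ, rfl⟩ := hw
      exact ⟨c • ψ, hCb c hc (Set.smul_mem_smul_set hψ), by simp⟩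
    have hs_closed : IsClosed s := isClosed_closure
    have hx₀ : StrongDual.toWeakDual g ∉ s := hg
    haveI : LocallyConvexSpace ℝ (WeakDual ℂ X) :=
      WeakBilin.locallyConvexSpace (B := topDualPairing ℂ X)
    obtain ⟨f, u, hfa, hfx⟩ :=
      RCLike.geometric_hahn_banach_closed_point (𝕜 := ℂ) hs_conv hs_closed hx₀
    have h0s : (0 : WeakDual ℂ X) ∈ s := by
      refine subset_closure ⟨0, ?_, map_zero _⟩
      have := hCb 0 (by simp) (Set.smul_mem_smul_set ha)
      exact (zero_smul ℂ a : (0:ℂ) • a = 0) ▸ this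
    have hu : 0 < u := by simpa using hfa 0 h0s
    have hbound : ∀ z ∈ s, ‖f z‖ ≤ u := by
      intro z hz
      rcases eq_or_ne (f z) 0 with h | h
      · simp [h, hu.le]
      · set c : ℂ := (‖f z‖ : ℂ) / f z with hcdef
        have hc : ‖c‖ = 1 := by
          rw [hcdef, norm_div, Complex.norm_real, norm_norm, div_self (norm_ne_zero_iff.2 h)]
        have hcz : c • z ∈ s := hs_bal c (by rw [hc]) (Set.smul_mem_smul_set hz)
        have h5 := hfa _ hcz
        rw [map_smul, smul_eq_mul, hcdef, div_mul_cancel₀ _ h] at h5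
        simpa using h5.le
    have hgx : u < ‖f (StrongDual.toWeakDual g)‖ := hfx.trans_le (Complex.re_le_norm _)
    obtain ⟨y, hy⟩ := exists_eval_of_continuous f
    refine ⟨((u⁻¹ : ℝ) : ℂ) • y, ?_, ?_⟩
    · rw [map_smul, norm_smul, Complex.norm_real, norm_inv, Real.norm_eq_abs,
        abs_of_pos hu, ← hy g]
      rw [← inv_mul_cancel₀ hu.ne']
      exact mul_lt_mul_of_pos_left hgx (inv_pos.2 hu)
    · intro φ hφ
      have hφs : StrongDual.toWeakDual φ ∈ s := hφ
      rw [map_smul, norm_smul, Complex.norm_real, norm_inv, Real.norm_eq_abs, abs_of_pos hu,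
        ← hy φ]
      have h6 := hbound _ hφs
      calc u⁻¹ * ‖f (StrongDual.toWeakDual φ)‖ ≤ u⁻¹ * u :=
            mul_le_mul_of_nonneg_left h6 (inv_nonneg.2 hu.le)
        _ = 1 := inv_mul_cancel₀ hu.ne'

lemma wscl_mono {S T : Set (StrongDual ℂ X)} (h : S ⊆ T) : wscl S ⊆ wscl T :=
  Set.preimage_mono (closure_mono (Set.image_mono h))

/-- If `U ⊆ X*` is an absolutely convex open set with a fundamental family `(Uₙ)` of
absolutely convex `U`-bounded sets which is not boundedly regular, then there are a
`Ũ`-bounded set `E`, points `xₙ* ∈ (E ∩ Ũ) \ w*-cl(Uₙ)` and vectors `xₙ ∈ X` with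
`|xₙ*(xₙ)| > 1` and `|x*(xₙ)| ≤ 1` on `w*-cl(Uₙ)`, and exponents `pₙ` with
`|xₙ*(xₙ)|^{pₙ} > n`; the homogeneous polynomials `Pₙ(x*) = (x*(xₙ))^{pₙ}` are then
bounded by `1` on each `w*-cl(Uₚ)` for `n ≥ p` but unbounded on the `Ũ`-bounded set `E`. -/
theorem not_boundedly_regular_polynomials [CompleteSpace X]
    (U : Set (StrongDual ℂ X)) (hUo : IsOpen U) (hUb : Balanced ℂ U) (hUc : Convex ℝ U)
    (Un : ℕ → Set (StrongDual ℂ X))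
    (hUnB : ∀ n, Balanced ℂ (Un n)) (hUnC : ∀ n, Convex ℝ (Un n))
    (hUnU : ∀ n, UBounded U (Un n))
    (hfund : ∀ B, UBounded U B → ∃ n, B ⊆ Un n)
    (hmono : ∀ n, ∃ r > (0 : ℝ), Un n + ball (0 : StrongDual ℂ X) r ⊆ Un (n + 1))
    (hnotreg : ∃ E, UBounded (tildeEnv U) E ∧ ∀ n, ¬ E ⊆ wscl (Un n)) :
    ∃ E : Set (StrongDual ℂ X), UBounded (tildeEnv U) E ∧
      ∃ (xs : ℕ → StrongDual ℂ X) (x : ℕ → X) (p : ℕ → ℕ),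
        (∀ n, xs n ∈ (E ∩ tildeEnv U) \ wscl (Un n)) ∧
        (∀ n, 1 < ‖xs n (x n)‖) ∧
        (∀ n, ∀ f ∈ wscl (Un n), ‖f (x n)‖ ≤ 1) ∧
        (∀ n : ℕ, (n : ℝ) < ‖xs n (x n)‖ ^ p n) ∧
        (∀ m n : ℕ, m ≤ n → ∀ f ∈ wscl (Un m), ‖f (x n)‖ ^ p n ≤ 1) ∧
        (∀ n : ℕ, ∃ f ∈ E, (n : ℝ) ≤ ‖f (x n)‖ ^ p n) := by
  classical
  obtain ⟨E, hE, hEn⟩ := hnotreg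
  -- Un is monotone
  have hUnmono : ∀ m n, m ≤ n → Un m ⊆ Un n := by
    intro m n hmn
    induction n with
    | zero => simpa [Nat.le_zero.1 hmn]
    | succ k ih =>
      rcases Nat.lt_or_ge m (k+1) with h | h
      · obtain ⟨r, hr, hsub⟩ := hmono k
        refine (ih (Nat.lt_succ_iff.1 h)).trans fun u hu => hsub ?_
        exact ⟨u, hu, 0, by simpa using hr, add_zero u⟩
      · simpa [Nat.le_antisymm hmn h]
  -- pick nonzero elements outside each wscl (Un n)
  have hpick : ∀ n, ∃ g, g ∈ E ∧ g ∉ wscl (Un n) ∧ g ≠ 0 := by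
    intro n
    by_cases h0 : (0 : StrongDual ℂ X) ∈ tildeEnv U
    · obtain ⟨B, hB, h0B⟩ := by
        simpa only [tildeEnv, Set.mem_iUnion, Set.mem_setOf_eq, exists_prop] using h0
      obtain ⟨m, hm⟩ := hfund B hB
      obtain ⟨g, hgE, hgn⟩ := Set.not_subset.1 (hEn (max n m))
      refine ⟨g, hgE, fun hc => hgn (wscl_mono (hUnmono n _ (le_max_left n m)) hc), ?_⟩
      rintro rfl
      exact hgn (wscl_mono ((hm.trans (hUnmono m _ (le_max_right n m)))) h0B)
    · obtain ⟨g, hgE, hgn⟩ := Set.not_subset.1 (hEn n)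
      exact ⟨g, hgE, hgn, fun hc => h0 (hc ▸ hE.1 hgE)⟩
  choose xs hxsE hxsn hxs0 using hpick
  -- separation
  have hsep : ∀ n, ∃ x : X, 1 < ‖xs n x‖ ∧ ∀ f ∈ wscl (Un n), ‖f x‖ ≤ 1 := fun n =>
    separation_lemma (hUnC n) (hUnB n) (hxsn n) (hxs0 n)
  choose x hx1 hxb using hsep
  -- exponents
  have hexp : ∀ n : ℕ, ∃ p : ℕ, (n : ℝ) < ‖xs n (x n)‖ ^ p := fun n =>
    pow_unbounded_of_one_lt _ (hx1 n)
  choose p hp using hexp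
  refine ⟨E, hE, xs, x, p, ?_, hx1, hxb, hp, ?_, ?_⟩
  · exact fun n => ⟨⟨hxsE n, hE.1 (hxsE n)⟩, hxsn n⟩
  · intro m n hmn f hf
    exact pow_le_one₀ (norm_nonneg _) (hxb n f (wscl_mono (hUnmono m n hmn) hf))
  · exact fun n => ⟨xs n, hxsE n, (hp n).le⟩
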